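/- Under the resistance-bound hypotheses of the previous statement, let $\pi^\epsilon$ be the stationary distribution of $K^\epsilon$, which by the Markov chain tree theorem satisfies $\pi^\epsilon(v)/\pi^\epsilon(v') = \mu^\epsilon(v)/\mu^\epsilon(v')$ for all $v, v'$. Then with $v^* \in \arg\min_v \gamma(v)$, there is a constant $C$ independent of $\epsilon$ (one may take $C = (C_2/C_1)^{|V|-1} \max_v |\mathcal{T}(v)|$) such that for all $\epsilon \in (0,1)$ and all $v$, $\pi^\epsilon(v) \le \frac{\pi^\epsilon(v)}{\pi^\epsilon(v^*)} \le C \epsilon^{\gamma(v) - \min_{v'} \gamma(v')}$. -/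

import Mathlib

open Finset
open scoped ENNReal

variable {V : Type*} [Fintype V] [DecidableEq V]

/-- A spanning tree rooted at `v`, represented by its successor function `f`:
from every vertex there is a directed path `u → f u → f (f u) → ⋯` reaching `v`.
Its edge set is `{(u, f u) : u ≠ v}`, which has exactly `|V| - 1` edges. -/
def IsRootedTree (f : V → V) (v : V) : Prop := f v = v ∧ ∀ u, ∃ k, f^[k] u = v

open Classical in
/-- The set of spanning trees rooted at `v`. -/
noncomputable def rootedTrees (v : V) : Finset (V → V) :=
  Finset.univ.filter (fun f => IsRootedTree f v)

/-- The weight `∏_{(u → u') ∈ T} K(u' ∣ u)` of a rooted tree (here `K u u'` denotes the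
transition probability from `u` to `u'`). -/
noncomputable def treeWeight (K : V → V → ℝ) (v : V) (f : V → V) : ℝ :=
  ∏ u ∈ Finset.univ.erase v, K u (f u)

/-- The total resistance `∑_{(u → u') ∈ T} R(u → u')` of a rooted tree. -/
noncomputable def treeResist (R : V → V → ℝ≥0∞) (v : V) (f : V → V) : ℝ≥0∞ :=
  ∑ u ∈ Finset.univ.erase v, R u (f u)

/-- `ε^r` for `r ∈ [0,∞]`, with `ε^∞ = 0`. -/
noncomputable def epow (ε : ℝ) (r : ℝ≥0∞) : ℝ := if r = ⊤ then 0 else ε ^ r.toReal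

/-- The Markov-chain-tree weight `μ^ε(v) = ∑_{T ∈ 𝒯(v)} ∏_{(u→u') ∈ T} K^ε(u' ∣ u)`. -/
noncomputable def treeMu (K : V → V → ℝ) (v : V) : ℝ :=
  ∑ f ∈ rootedTrees v, treeWeight K v f

/-- The stochastic potential `γ(v) = min_{T ∈ 𝒯(v)} R(T)`. -/
noncomputable def stochPot (R : V → V → ℝ≥0∞) (v : V) : ℝ≥0∞ :=
  (rootedTrees v).inf (treeResist R v)

/-- `k`-step transition probabilities of a kernel. -/
noncomputable def kerPow (K : V → V → ℝ) : ℕ → V → V → ℝ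
  | 0 => fun v v' => if v = v' then 1 else 0
  | (k + 1) => fun v v' => ∑ u, K v u * kerPow K k u v'

/-- A kernel is ergodic (irreducible and aperiodic, i.e. primitive) if some power is
entrywise positive. -/
def IsErgodicKernel (K : V → V → ℝ) : Prop := ∃ m : ℕ, ∀ v v', 0 < kerPow K m v v'

-- epow lemmas
lemma epow_nonneg {ε : ℝ} (hε : 0 ≤ ε) (r : ℝ≥0∞) : 0 ≤ epow ε r := by
  unfold epow; split
  · exact le_refl 0
  · exact Real.rpow_nonneg hε _

lemma epow_pos {ε : ℝ} (hε : 0 < ε) {r : ℝ≥0∞} (hr : r ≠ ⊤) : 0 < epow ε r := by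
  unfold epow; rw [if_neg hr]; exact Real.rpow_pos_of_pos hε _

lemma epow_add {ε : ℝ} (hε : 0 < ε) (a b : ℝ≥0∞) :
    epow ε (a + b) = epow ε a * epow ε b := by
  rcases eq_or_ne a ⊤ with ha | ha
  · simp [epow, ha, top_add]
  rcases eq_or_ne b ⊤ with hb | hb
  · simp [epow, hb, add_top]
  have hab : a + b ≠ ⊤ := ENNReal.add_ne_top.2 ⟨ha, hb⟩
  simp only [epow, if_neg ha, if_neg hb, if_neg hab]
  rw [ENNReal.toReal_add ha hb, Real.rpow_add hε]

lemma epow_sum {ε : ℝ} (hε : 0 < ε) {ι : Type*} (s : Finset ι) (r : ι → ℝ≥0∞) :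
    epow ε (∑ i ∈ s, r i) = ∏ i ∈ s, epow ε (r i) := by
  classical
  induction s using Finset.induction_on with
  | empty => simp [epow]
  | insert _ _ h ih => rw [Finset.sum_insert h, Finset.prod_insert h, epow_add hε, ih]

lemma epow_anti {ε : ℝ} (hε0 : 0 < ε) (hε1 : ε ≤ 1) {a b : ℝ≥0∞} (hab : a ≤ b) :
    epow ε b ≤ epow ε a := by
  rcases eq_or_ne b ⊤ with hb | hb
  · rw [epow, if_pos hb]; exact epow_nonneg hε0.le a
  have ha : a ≠ ⊤ := fun h => hb (top_le_iff.1 (h ▸ hab))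
  simp only [epow, if_neg ha, if_neg hb]
  exact Real.rpow_le_rpow_of_exponent_ge hε0 hε1 (ENNReal.toReal_le_toReal ha hb |>.2 hab)

-- kernel lemmas
lemma kerPow_nonneg {K : V → V → ℝ} (hK : ∀ u w, 0 ≤ K u w) (k : ℕ) (u w : V) :
    0 ≤ kerPow K k u w := by
  induction k generalizing u w with
  | zero => unfold kerPow; split <;> norm_num
  | succ k ih => exact Finset.sum_nonneg fun x _ => mul_nonneg (hK u x) (ih x w)

lemma exists_pos_tree {K : V → V → ℝ} (hK : ∀ u w, 0 ≤ K u w)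
    (herg : IsErgodicKernel K) (v : V) :
    ∃ f ∈ rootedTrees v, 0 < treeWeight K v f := by
  classical
  obtain ⟨m, hm⟩ := herg
  have hex : ∀ u : V, ∃ k, 0 < kerPow K k u v := fun u => ⟨m, hm u v⟩
  set d : V → ℕ := fun u => Nat.find (hex u) with hd
  have hdv : d v = 0 := by
    have : 0 < kerPow K 0 v v := by unfold kerPow; simp
    exact Nat.le_zero.1 (Nat.find_le this)
  have hstep : ∀ u : V, u ≠ v → ∃ w, 0 < K u w ∧ d w < d u := by
    intro u hu
    have hspec : 0 < kerPow K (d u) u v := Nat.find_spec (hex u)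
    have hd1 : d u ≠ 0 := by
      intro h
      have : 0 < kerPow K 0 u v := h ▸ hspec
      unfold kerPow at this
      rw [if_neg hu] at this; exact lt_irrefl 0 this
    obtain ⟨k, hk⟩ := Nat.exists_eq_succ_of_ne_zero hd1
    rw [hk] at hspec
    have : ∃ w ∈ (Finset.univ : Finset V), K u w * kerPow K k w v ≠ 0 := by
      apply Finset.exists_ne_zero_of_sum_ne_zero
      exact ne_of_gt hspec
    obtain ⟨w, _, hw⟩ := this
    have h1 : 0 < K u w := lt_of_le_of_ne (hK u w) (by
      intro h; exact hw (by rw [← h, zero_mul]))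
    have h2 : 0 < kerPow K k w v := lt_of_le_of_ne (kerPow_nonneg hK k w v) (by
      intro h; exact hw (by rw [← h, mul_zero]))
    exact ⟨w, h1, lt_of_le_of_lt (Nat.find_le h2) (by omega)⟩
  set f : V → V := fun u => if hu : u = v then v else Classical.choose (hstep u hu) with hf
  have hfv : f v = v := by simp [hf]
  have hfp : ∀ u, u ≠ v → 0 < K u (f u) ∧ d (f u) < d u := by
    intro u hu
    simp only [hf, dif_neg hu]
    exact Classical.choose_spec (hstep u hu)
  have hiter : ∀ n, ∀ u : V, d u ≤ n → ∃ k, f^[k] u = v := by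
    intro n
    induction n with
    | zero =>
      intro u hu
      rcases eq_or_ne u v with h | h
      · exact ⟨0, h⟩
      · exact absurd (Nat.le_zero.1 hu) (by
          have := (hfp u h).2; omega)
    | succ n ih =>
      intro u hu
      rcases eq_or_ne u v with h | h
      · exact ⟨0, h⟩
      · obtain ⟨k, hk⟩ := ih (f u) (by have := (hfp u h).2; omega)
        exact ⟨k + 1, by rw [Function.iterate_succ_apply, hk]⟩
  refine ⟨f, ?_, ?_⟩
  · rw [rootedTrees, Finset.mem_filter]
    exact ⟨Finset.mem_univ f, hfv, fun u => hiter (d u) u le_rfl⟩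
  · exact Finset.prod_pos fun u hu => (hfp u (Finset.ne_of_mem_erase hu)).1

/-- Under the resistance bounds, for the stationary distribution `π^ε` (which by the Markov
chain tree theorem satisfies `π^ε(v)/π^ε(v') = μ^ε(v)/μ^ε(v')`), with `v*` minimizing the
stochastic potential `γ`, there is a constant `C` independent of `ε` such that
`π^ε(v) ≤ π^ε(v)/π^ε(v*) ≤ C ε^{γ(v) - min γ}` for all `ε ∈ (0,1)`. -/
theorem stmt8 (K : ℝ → V → V → ℝ) (R : V → V → ℝ≥0∞) (C1 C2 : ℝ)
    (hC1 : 0 < C1) (hC12 : C1 ≤ C2) (hcard : 2 ≤ Fintype.card V)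
    (hbound : ∀ ε ∈ Set.Ioo (0 : ℝ) 1, ∀ v v',
      C1 * epow ε (R v v') ≤ K ε v v' ∧ K ε v v' ≤ C2 * epow ε (R v v'))
    (hstoch : ∀ ε ∈ Set.Ioo (0 : ℝ) 1, ∀ v, ∑ v', K ε v v' = 1)
    (hergodic : ∀ ε ∈ Set.Ioo (0 : ℝ) 1, IsErgodicKernel (K ε))
    (pi : ℝ → V → ℝ)
    (hpi_pos : ∀ ε ∈ Set.Ioo (0 : ℝ) 1, ∀ v, 0 < pi ε v)
    (hpi_sum : ∀ ε ∈ Set.Ioo (0 : ℝ) 1, ∑ v, pi ε v = 1)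
    (htree : ∀ ε ∈ Set.Ioo (0 : ℝ) 1, ∀ v v',
      pi ε v * treeMu (K ε) v' = pi ε v' * treeMu (K ε) v)
    (vstar : V) (hvstar : ∀ v, stochPot R vstar ≤ stochPot R v) :
    ∃ C : ℝ, ∀ ε ∈ Set.Ioo (0 : ℝ) 1, ∀ v : V,
      pi ε v ≤ pi ε v / pi ε vstar ∧
      pi ε v / pi ε vstar ≤ C * epow ε (stochPot R v - stochPot R vstar) := by
  classical
  set n1 := Fintype.card V - 1 with hn1
  set N : ℝ := (Fintype.card (V → V) : ℝ) with hN
  have hC2 : 0 < C2 := lt_of_lt_of_le hC1 hC12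
  refine ⟨N * (C2 / C1) ^ n1, ?_⟩
  rintro ε ⟨hε0, hε1⟩ v
  have hεm : ε ∈ Set.Ioo (0 : ℝ) 1 := ⟨hε0, hε1⟩
  have hKnn : ∀ u w, 0 ≤ K ε u w := fun u w =>
    le_trans (mul_nonneg hC1.le (epow_nonneg hε0.le _)) (hbound ε hεm u w).1
  have hWnn : ∀ w f, 0 ≤ treeWeight (K ε) w f := fun w f =>
    Finset.prod_nonneg fun u _ => hKnn u (f u)
  have hcardE : ∀ w : V, (Finset.univ.erase w).card = n1 := fun w => by
    rw [Finset.card_erase_of_mem (Finset.mem_univ w), Finset.card_univ]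
  -- upper bound on treeMu
  have hub : ∀ w : V,
      treeMu (K ε) w ≤ N * (C2 ^ n1 * epow ε (stochPot R w)) := by
    intro w
    have h1 : ∀ f ∈ rootedTrees w,
        treeWeight (K ε) w f ≤ C2 ^ n1 * epow ε (stochPot R w) := by
      intro f hf
      have h2 : treeWeight (K ε) w f ≤ C2 ^ n1 * epow ε (treeResist R w f) := by
        calc treeWeight (K ε) w f
            ≤ ∏ u ∈ Finset.univ.erase w, (C2 * epow ε (R u (f u))) :=
              Finset.prod_le_prod (fun u _ => hKnn u (f u))
                (fun u _ => (hbound ε hεm u (f u)).2)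
          _ = C2 ^ n1 * epow ε (treeResist R w f) := by
              rw [Finset.prod_mul_distrib, Finset.prod_const, hcardE w,
                treeResist, epow_sum hε0]
      refine h2.trans (mul_le_mul_of_nonneg_left ?_ (pow_nonneg hC2.le _))
      exact epow_anti hε0 hε1.le (Finset.inf_le hf)
    calc treeMu (K ε) w ≤ ∑ _f ∈ rootedTrees w, C2 ^ n1 * epow ε (stochPot R w) :=
          Finset.sum_le_sum h1
      _ = (rootedTrees w).card * (C2 ^ n1 * epow ε (stochPot R w)) := by
          rw [Finset.sum_const, nsmul_eq_mul]
      _ ≤ N * (C2 ^ n1 * epow ε (stochPot R w)) := by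
          refine mul_le_mul_of_nonneg_right ?_
            (mul_nonneg (pow_nonneg hC2.le _) (epow_nonneg hε0.le _))
          exact_mod_cast Nat.cast_le.2 (Finset.card_le_univ _)
  -- positive tree at vstar
  obtain ⟨f1, hf1mem, hf1pos⟩ := exists_pos_tree hKnn (hergodic ε hεm) vstar
  have hμpos : 0 < treeMu (K ε) vstar :=
    lt_of_lt_of_le hf1pos (Finset.single_le_sum (fun f _ => hWnn vstar f) hf1mem)
  have hγstar : stochPot R vstar ≠ ⊤ := by
    have hres : treeResist R vstar f1 ≠ ⊤ := by
      rw [treeResist]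
      rw [← lt_top_iff_ne_top, ENNReal.sum_lt_top]
      intro u hu
      rw [lt_top_iff_ne_top]
      intro htop
      have hK0 : K ε u (f1 u) ≤ 0 := by
        have := (hbound ε hεm u (f1 u)).2
        rw [epow, if_pos htop, mul_zero] at this
        exact this
      have hup : 0 < K ε u (f1 u) := by
        refine lt_of_le_of_ne (hKnn u (f1 u)) fun h => ?_
        have hz : treeWeight (K ε) vstar f1 = 0 := Finset.prod_eq_zero hu h.symm
        rw [hz] at hf1pos
        exact lt_irrefl 0 hf1pos
      exact absurd hup (not_lt.2 hK0)
    exact fun h => hres (top_le_iff.1 (h ▸ Finset.inf_le hf1mem))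
  -- lower bound on treeMu at any w
  have hlb : ∀ w : V, (rootedTrees w).Nonempty → stochPot R w ≠ ⊤ →
      C1 ^ n1 * epow ε (stochPot R w) ≤ treeMu (K ε) w := by
    intro w hne hwtop
    obtain ⟨f0, hf0mem, hinf⟩ := Finset.exists_mem_eq_inf (rootedTrees w) hne (treeResist R w)
    have hres : treeResist R w f0 = stochPot R w := hinf.symm
    calc C1 ^ n1 * epow ε (stochPot R w)
        = ∏ u ∈ Finset.univ.erase w, (C1 * epow ε (R u (f0 u))) := by
          rw [Finset.prod_mul_distrib, Finset.prod_const, hcardE w, ← hres,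
            treeResist, epow_sum hε0]
      _ ≤ treeWeight (K ε) w f0 :=
          Finset.prod_le_prod (fun u _ => mul_nonneg hC1.le (epow_nonneg hε0.le _))
            (fun u _ => (hbound ε hεm u (f0 u)).1)
      _ ≤ treeMu (K ε) w := Finset.single_le_sum (fun f _ => hWnn w f) hf0mem
  have hlbstar : C1 ^ n1 * epow ε (stochPot R vstar) ≤ treeMu (K ε) vstar :=
    hlb vstar ⟨f1, hf1mem⟩ hγstar
  have hπs : 0 < pi ε vstar := hpi_pos ε hεm vstar
  have hπ1 : pi ε vstar ≤ 1 := by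
    rw [← hpi_sum ε hεm]
    exact Finset.single_le_sum (fun w _ => (hpi_pos ε hεm w).le) (Finset.mem_univ vstar)
  constructor
  · rw [le_div_iff₀ hπs]
    exact mul_le_of_le_one_right (hpi_pos ε hεm v).le hπ1
  · have heq : pi ε v / pi ε vstar = treeMu (K ε) v / treeMu (K ε) vstar := by
      rw [div_eq_div_iff hπs.ne' hμpos.ne']
      have := htree ε hεm v vstar
      linarith
    rw [heq, div_le_iff₀ hμpos]
    have key : epow ε (stochPot R v) =
        epow ε (stochPot R v - stochPot R vstar) * epow ε (stochPot R vstar) := by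
      rw [← epow_add hε0, tsub_add_cancel_of_le (hvstar v)]
    have hpow : (C2 / C1) ^ n1 * C1 ^ n1 = C2 ^ n1 := by
      rw [div_pow, div_mul_cancel₀]
      exact pow_ne_zero _ hC1.ne'
    calc treeMu (K ε) v ≤ N * (C2 ^ n1 * epow ε (stochPot R v)) := hub v
      _ = N * (C2 / C1) ^ n1 * epow ε (stochPot R v - stochPot R vstar) *
          (C1 ^ n1 * epow ε (stochPot R vstar)) := by
          rw [key, ← hpow]; ring
      _ ≤ N * (C2 / C1) ^ n1 * epow ε (stochPot R v - stochPot R vstar) *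
          treeMu (K ε) vstar := by
          refine mul_le_mul_of_nonneg_left hlbstar ?_
          refine mul_nonneg (mul_nonneg ?_ (pow_nonneg (div_nonneg hC2.le hC1.le) _))
            (epow_nonneg hε0.le _)
          positivity
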